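/- arXiv:2106.14453 — 3 statements merged into one kernel-verified Lean document; each statement's English description precedes it below -/
import Mathlib

section
/- Let k be a field of characteristic 0 and consider the pencil σ = (2x_0x_2, 2x_0x_1 + x_3²) in k[x_0,x_1,x_2,x_3]. Then the kernel of the Jacobian matrix of σ, as a submodule of R^4, is free of rank 2 generated by the columns of the matrix with rows (x_0, 0), (−x_1, −x_3), (−x_2, 0), (0, x_0); i.e., both generators have degree 1 and these two syzygies generate the full syzygy module of the Jacobian matrix. -/
open MvPolynomial

lemma X_not_dvd_X {k : Type*} [Field k] {i j : Fin 4} (h : j ≠ i) :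
    ¬ (X i ∣ (X j : MvPolynomial (Fin 4) k)) := by
  rintro ⟨t, ht⟩
  have := congrArg (eval (fun m : Fin 4 => if m = i then (0 : k) else 1)) ht
  simp [h] at this

lemma prime_X0 {k : Type*} [Field k] : Prime (X 0 : MvPolynomial (Fin 4) k) := by
  have h : Prime ((finSuccEquiv k 3) (X 0)) := by
    rw [finSuccEquiv_X_zero]; exact Polynomial.prime_X
  exact (MulEquiv.prime_iff (finSuccEquiv k 3).toMulEquiv).mp h

/-- For the pencil `σ = (2x₀x₂, 2x₀x₁ + x₃²)`, the kernel of the Jacobian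
matrix is free of rank 2, generated by the two degree-1 syzygies
`(x₀, −x₁, −x₂, 0)` and `(0, −x₃, 0, x₀)`. -/
theorem stmt_8 {k : Type*} [Field k] [CharZero k] :
    LinearMap.ker
        ((Matrix.of
          ![![2 * X 2, 0, 2 * X 0, 0],
            ![2 * X 1, 2 * X 0, 0, 2 * X 3]] :
          Matrix (Fin 2) (Fin 4) (MvPolynomial (Fin 4) k)).mulVecLin) =
      Submodule.span (MvPolynomial (Fin 4) k)
        ({![X 0, -X 1, -X 2, 0], ![0, -X 3, 0, X 0]} :
          Set (Fin 4 → MvPolynomial (Fin 4) k)) ∧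
    LinearIndependent (MvPolynomial (Fin 4) k)
      ![(![X 0, -X 1, -X 2, 0] : Fin 4 → MvPolynomial (Fin 4) k),
        ![0, -X 3, 0, X 0]] := by
  have two_ne : (2 : MvPolynomial (Fin 4) k) ≠ 0 := two_ne_zero
  have hX0 : Prime (X 0 : MvPolynomial (Fin 4) k) := prime_X0
  constructor
  · apply le_antisymm
    · intro v hv
      rw [LinearMap.mem_ker] at hv
      have h0 := congrFun hv 0
      have h1 := congrFun hv 1
      simp [Matrix.mulVecLin_apply, Matrix.mulVec, dotProduct,
        Fin.sum_univ_four, Matrix.vecHead, Matrix.vecTail] at h0 h1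
      have h0' : X 2 * v 0 + X 0 * v 2 = 0 := by
        refine (mul_eq_zero.mp ?_).resolve_left two_ne
        linear_combination h0
      have h1' : X 1 * v 0 + X 0 * v 1 + X 3 * v 3 = 0 := by
        refine (mul_eq_zero.mp ?_).resolve_left two_ne
        linear_combination h1
      have hd0 : (X 0 : MvPolynomial (Fin 4) k) ∣ X 2 * v 0 :=
        ⟨-v 2, by linear_combination h0'⟩
      obtain ⟨p, hp⟩ := (hX0.dvd_mul.mp hd0).resolve_left (X_not_dvd_X (by decide))
      have hv2 : v 2 = -(X 2 * p) := by
        have h : (X 0 : MvPolynomial (Fin 4) k) * (X 2 * p + v 2) = 0 := by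
          linear_combination h0' - X 2 * hp
        have := (mul_eq_zero.mp h).resolve_left hX0.ne_zero
        linear_combination this
      have hd3 : (X 0 : MvPolynomial (Fin 4) k) ∣ X 3 * v 3 :=
        ⟨-(X 1 * p) - v 1, by linear_combination h1' - X 1 * hp⟩
      obtain ⟨q, hq⟩ := (hX0.dvd_mul.mp hd3).resolve_left (X_not_dvd_X (by decide))
      have hv1 : v 1 = -(X 1 * p) - X 3 * q := by
        have h : (X 0 : MvPolynomial (Fin 4) k) * (X 1 * p + v 1 + X 3 * q) = 0 := by
          linear_combination h1' - X 1 * hp - X 3 * hq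
        have := (mul_eq_zero.mp h).resolve_left hX0.ne_zero
        linear_combination this
      rw [Submodule.mem_span_pair]
      refine ⟨p, q, ?_⟩
      funext i
      fin_cases i <;>
        simp [hp, hv1, hv2, hq, smul_eq_mul] <;> ring
    · rw [Submodule.span_le]
      rintro x (rfl | rfl) <;>
      · rw [SetLike.mem_coe, LinearMap.mem_ker]
        funext i
        fin_cases i <;>
          simp [Matrix.mulVecLin_apply, Matrix.mulVec, dotProduct,
            Fin.sum_univ_four, Matrix.vecHead, Matrix.vecTail] <;> ring
  · rw [Fintype.linearIndependent_iff]
    intro g hg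
    have h0 := congrFun hg 0
    have h3 := congrFun hg 3
    simp [Fin.sum_univ_two, smul_eq_mul] at h0 h3
    have hX0ne : (X 0 : MvPolynomial (Fin 4) k) ≠ 0 := hX0.ne_zero
    intro i
    fin_cases i
    · exact h0
    · exact h3
end

section
/- Let k be a field of characteristic 0. For the sequence σ' = (x_0x_1, x_0²x_1 + g) in R = k[x_0,x_1,x_2,x_3] with g homogeneous of degree 3 in x_2, x_3 only and ∂g/∂x_2, ∂g/∂x_3 coprime, the Jacobian matrix of σ' has no nonzero syzygy of degree ≤ 1; that is, no nonzero vector (a_0,a_1,a_2,a_3) of homogeneous polynomials of degree ≤ 1 satisfies the two relations a_0x_1 + a_1x_0 = 0 and 2a_0x_0x_1 + a_1x_0² + a_2·∂g/∂x_2 + a_3·∂g/∂x_3 = 0. -/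
open MvPolynomial

section Helpers

variable {σ : Type*} [DecidableEq σ] {R : Type*} [CommSemiring R]

lemma my_coeff_pderiv (i : σ) (u : σ →₀ ℕ) (p : MvPolynomial σ R) :
    coeff u (pderiv i p) = ((u i + 1 : ℕ) : R) * coeff (u + Finsupp.single i 1) p := by
  induction p using MvPolynomial.induction_on' with
  | add p q hp hq => simp [hp, hq, mul_add]
  | monomial s a =>
    rw [pderiv_monomial, coeff_monomial, coeff_monomial]
    by_cases h : s = u + Finsupp.single i 1
    · subst h
      rw [if_pos (add_tsub_cancel_right _ _), if_pos rfl]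
      simp [mul_comm]
    · rw [if_neg h, mul_zero]
      rcases eq_or_ne (s i) 0 with h0 | h0
      · split
        · simp [h0]
        · rfl
      · rw [if_neg]
        intro hsu
        apply h
        rw [← hsu, tsub_add_cancel_of_le]
        exact Finsupp.single_le_iff.mpr (Nat.one_le_iff_ne_zero.mpr h0)

omit [DecidableEq σ] in
lemma my_deg_add (a b : σ →₀ ℕ) : (a + b).degree = a.degree + b.degree := by
  simp [Finsupp.degree_eq_weight_one, map_add]

omit [DecidableEq σ] in
lemma my_deg_single (i : σ) : (Finsupp.single i 1).degree = 1 := by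
  exact Finsupp.degree_single i 1

lemma my_isHomogeneous_pderiv {p : MvPolynomial σ R} {n : ℕ} (hp : p.IsHomogeneous n) (i : σ) :
    (pderiv i p).IsHomogeneous (n - 1) := by
  intro d hd
  rw [my_coeff_pderiv] at hd
  have h2 : coeff (d + Finsupp.single i 1) p ≠ 0 := fun h => hd (by simp [h])
  have h3 := hp h2
  rw [Pi.one_def, ← Finsupp.degree_eq_weight_one] at h3 ⊢
  rw [my_deg_add, my_deg_single] at h3
  omega

lemma my_pderiv_eq_zero {p : MvPolynomial σ R} (i : σ)
    (h : ∀ d ∈ p.support, d i = 0) : pderiv i p = 0 := by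
  ext u
  rw [my_coeff_pderiv, coeff_zero]
  rcases eq_or_ne (coeff (u + Finsupp.single i 1) p) 0 with h2 | h2
  · rw [h2, mul_zero]
  · have := h _ (MvPolynomial.mem_support_iff.mpr h2)
    simp at this

lemma my_support_of_pderiv_eq_zero [NoZeroDivisors R] {p : MvPolynomial σ R} {i : σ}
    (hch : ∀ n : ℕ, n ≠ 0 → (n : R) ≠ 0)
    (h : pderiv i p = 0) : ∀ d ∈ p.support, d i = 0 := by
  intro d hd
  by_contra hdi
  have h1 : (d - Finsupp.single i 1) + Finsupp.single i 1 = d :=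
    tsub_add_cancel_of_le (Finsupp.single_le_iff.mpr (Nat.one_le_iff_ne_zero.mpr hdi))
  have h2 := congrArg (coeff (d - Finsupp.single i 1)) h
  rw [my_coeff_pderiv, coeff_zero, h1] at h2
  rcases mul_eq_zero.mp h2 with h3 | h3
  · exact hch _ (Nat.succ_ne_zero _) h3
  · exact MvPolynomial.mem_support_iff.mp hd h3

lemma my_dvd_homog {q b : MvPolynomial σ R} {n : ℕ} (hq : q.IsHomogeneous 2)
    (hb : b.IsHomogeneous n) (hn : n < 2) (hdvd : q ∣ b) : b = 0 := by
  obtain ⟨t, rfl⟩ := hdvd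
  ext d
  rw [coeff_zero]
  by_contra hc
  have hd : d.degree = n := by
    have := hb hc; rwa [Pi.one_def, ← Finsupp.degree_eq_weight_one] at this
  apply hc
  rw [coeff_mul]
  apply Finset.sum_eq_zero
  intro x hx
  rw [Finset.HasAntidiagonal.mem_antidiagonal] at hx
  have hle : (x.1).degree ≤ d.degree := by
    rw [← hx, my_deg_add]; exact Nat.le_add_right _ _
  rw [hq.coeff_eq_zero (by omega), zero_mul]

omit [DecidableEq σ] in
lemma my_not_unit [Nontrivial R] {p : MvPolynomial σ R} {n : ℕ}
    (hp : p.IsHomogeneous n) (hn : n ≠ 0) (hu : IsUnit p) : False := by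
  obtain ⟨w, hw⟩ := isUnit_iff_exists_inv.mp hu
  have h1 := congrArg constantCoeff hw
  rw [map_mul, map_one, show constantCoeff p = coeff 0 p from rfl,
    hp.coeff_eq_zero (by simp [hn, Ne.symm hn]), zero_mul] at h1
  exact zero_ne_one h1

end Helpers

section Psi

variable {k : Type*} [Field k]

/-- the substitution killing `x₀` and `x₁` -/
noncomputable def psiF : Fin 4 → MvPolynomial (Fin 4) k :=
  fun j => if j = 0 then 0 else if j = 1 then 0 else X j

lemma psi_fix {p : MvPolynomial (Fin 4) k}
    (h : ∀ d ∈ p.support, d 0 = 0 ∧ d 1 = 0) : aeval psiF p = p := by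
  conv_lhs => rw [p.as_sum]
  rw [map_sum]
  conv_rhs => rw [p.as_sum]
  refine Finset.sum_congr rfl fun v hv => ?_
  rw [aeval_monomial, algebraMap_eq, monomial_eq]
  congr 1
  refine Finsupp.prod_congr fun x hx => ?_
  have hx' : v x ≠ 0 := Finsupp.mem_support_iff.mp hx
  have h0 : x ≠ 0 := fun he => hx' (he ▸ (h v hv).1)
  have h1 : x ≠ 1 := fun he => hx' (he ▸ (h v hv).2)
  simp [psiF, h0, h1]

end Psi

/-- For `σ' = (x₀x₁, x₀²x₁ + g)` with `g` a cubic in `x₂,x₃` only whose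
partials are coprime, the Jacobian matrix of `σ'` has no nonzero syzygy of
degree ≤ 1. -/
theorem stmt_11 {k : Type*} [Field k] [CharZero k]
    (g : MvPolynomial (Fin 4) k) (hg : g.IsHomogeneous 3)
    (h0 : pderiv 0 g = 0) (h1 : pderiv 1 g = 0)
    (hcop : ∀ p : MvPolynomial (Fin 4) k,
      p ∣ pderiv 2 g → p ∣ pderiv 3 g → IsUnit p) :
    ∀ m ≤ 1, ∀ a : Fin 4 → MvPolynomial (Fin 4) k,
      (∀ i, (a i).IsHomogeneous m) →
      a 0 * X 1 + a 1 * X 0 = 0 →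
      a 0 * (2 * X 0 * X 1) + a 1 * X 0 ^ 2
        + a 2 * pderiv 2 g + a 3 * pderiv 3 g = 0 →
      a = 0 := by
  intro m hm a ha hE1 hE2
  have hch : ∀ n : ℕ, n ≠ 0 → ((n : k) ≠ 0) := fun n hn => Nat.cast_ne_zero.mpr hn
  set g2 := pderiv 2 g with hg2def
  set g3 := pderiv 3 g with hg3def
  -- supports of g, g2, g3 avoid variables 0 and 1
  have hs0 := my_support_of_pderiv_eq_zero hch h0
  have hs1 := my_support_of_pderiv_eq_zero hch h1
  have hsup : ∀ i : Fin 4, ∀ d ∈ (pderiv i g).support, d 0 = 0 ∧ d 1 = 0 := by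
    intro i d hd
    have hc := MvPolynomial.mem_support_iff.mp hd
    rw [my_coeff_pderiv] at hc
    have hc2 : coeff (d + Finsupp.single i 1) g ≠ 0 := right_ne_zero_of_mul hc
    have hmem := MvPolynomial.mem_support_iff.mpr hc2
    have e0 := hs0 _ hmem
    have e1 := hs1 _ hmem
    have e0' : d 0 + (Finsupp.single i 1) 0 = 0 := by
      rw [← Finsupp.add_apply]; exact e0
    have e1' : d 1 + (Finsupp.single i 1) 1 = 0 := by
      rw [← Finsupp.add_apply]; exact e1
    exact ⟨Nat.eq_zero_of_add_eq_zero_right e0', Nat.eq_zero_of_add_eq_zero_right e1'⟩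
  have hfix2 : aeval (psiF (k := k)) g2 = g2 := psi_fix (hsup 2)
  have hfix3 : aeval (psiF (k := k)) g3 = g3 := psi_fix (hsup 3)
  -- homogeneity of the partials
  have hg2h : g2.IsHomogeneous 2 := by
    have := my_isHomogeneous_pderiv hg 2; norm_num at this; exact this
  have hg3h : g3.IsHomogeneous 2 := by
    have := my_isHomogeneous_pderiv hg 3; norm_num at this; exact this
  have hg3ne : g3 ≠ 0 := by
    intro h3z
    exact my_not_unit hg2h two_ne_zero (hcop g2 dvd_rfl (h3z ▸ dvd_zero g2))
  -- the key coprimality lemma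
  have hL : ∀ n ≤ 1, ∀ b2 b3 : MvPolynomial (Fin 4) k, b2.IsHomogeneous n →
      b3.IsHomogeneous n → b2 * g2 + b3 * g3 = 0 → b2 = 0 ∧ b3 = 0 := by
    intro n hn b2 b3 hb2 hb3 heq
    have hrel : IsRelPrime g3 g2 := fun p hp3 hp2 => hcop p hp2 hp3
    have hdvd : g3 ∣ b2 * g2 := ⟨-b3, by linear_combination heq⟩
    have hb2z : b2 = 0 := my_dvd_homog hg3h hb2 (by omega) (hrel.dvd_of_dvd_mul_right hdvd)
    refine ⟨hb2z, ?_⟩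
    rw [hb2z, zero_mul, zero_add] at heq
    exact (mul_eq_zero.mp heq).resolve_right hg3ne
  -- constants are fixed by psi
  have hfix0 : ∀ b : MvPolynomial (Fin 4) k, b.IsHomogeneous 0 → aeval (psiF (k := k)) b = b := by
    intro b hb
    refine psi_fix fun d hd => ?_
    have := hb (MvPolynomial.mem_support_iff.mp hd)
    rw [Pi.one_def, ← Finsupp.degree_eq_weight_one] at this
    have hd0 : d = 0 := (Finsupp.degree_eq_zero_iff d).mp this
    simp [hd0]
  have hm1 : m - 1 = 0 := by omega
  -- derivative extraction: pderiv i (a 2) = 0 and pderiv i (a 3) = 0 for i = 0, 1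
  have hX0 : aeval (psiF (k := k)) (X 0 : MvPolynomial (Fin 4) k) = 0 := by simp [psiF]
  have hX1 : aeval (psiF (k := k)) (X 1 : MvPolynomial (Fin 4) k) = 0 := by simp [psiF]
  have h2C : (2 : MvPolynomial (Fin 4) k) * X 0 * X 1 = C 2 * (X 0 * X 1) := by
    rw [map_ofNat]; ring
  have hext : ∀ i : Fin 4, i = 0 ∨ i = 1 → pderiv i (a 2) = 0 ∧ pderiv i (a 3) = 0 := by
    intro i hi
    have hpg2 : pderiv i g2 = 0 := my_pderiv_eq_zero i fun d hd => by
      rcases hi with rfl | rfl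
      exacts [(hsup 2 d hd).1, (hsup 2 d hd).2]
    have hpg3 : pderiv i g3 = 0 := my_pderiv_eq_zero i fun d hd => by
      rcases hi with rfl | rfl
      exacts [(hsup 3 d hd).1, (hsup 3 d hd).2]
    have hD := congrArg (pderiv i) hE2
    rw [map_add, map_add, map_add, map_zero] at hD
    have hP := congrArg (aeval (psiF (k := k))) hD
    have kA : aeval (psiF (k := k)) (pderiv i (a 0 * (2 * X 0 * X 1))) = 0 := by
      simp only [pderiv_mul, h2C, pderiv_C_mul, map_add, map_mul, map_pow, hX0, hX1,
        mul_zero, zero_mul, add_zero, zero_add]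
    have kB : aeval (psiF (k := k)) (pderiv i (a 1 * X 0 ^ 2)) = 0 := by
      simp only [pderiv_mul, pderiv_pow, map_add, map_mul, map_pow, map_natCast, hX0,
        mul_zero, zero_mul, add_zero, zero_add, zero_pow, OfNat.ofNat_ne_zero, ne_eq,
        not_false_iff]
      simp
    have k2 : aeval (psiF (k := k)) (pderiv i (a 2 * g2)) = aeval (psiF (k := k)) (pderiv i (a 2)) * g2 := by
      rw [pderiv_mul, hpg2, mul_zero, add_zero, map_mul, hfix2]
    have k3 : aeval (psiF (k := k)) (pderiv i (a 3 * g3)) = aeval (psiF (k := k)) (pderiv i (a 3)) * g3 := by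
      rw [pderiv_mul, hpg3, mul_zero, add_zero, map_mul, hfix3]
    simp only [map_add, map_zero] at hP
    rw [kA, kB, k2, k3] at hP
    have hpa2 : (pderiv i (a 2)).IsHomogeneous 0 := hm1 ▸ my_isHomogeneous_pderiv (ha 2) i
    have hpa3 : (pderiv i (a 3)).IsHomogeneous 0 := hm1 ▸ my_isHomogeneous_pderiv (ha 3) i
    rw [hfix0 _ hpa2, hfix0 _ hpa3] at hP
    exact hL 0 (by omega) _ _ hpa2 hpa3 (by linear_combination hP)
  obtain ⟨h02, h03⟩ := hext 0 (Or.inl rfl)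
  obtain ⟨h12, h13⟩ := hext 1 (Or.inr rfl)
  have hfa2 : aeval (psiF (k := k)) (a 2) = a 2 := psi_fix fun d hd =>
    ⟨my_support_of_pderiv_eq_zero hch h02 d hd, my_support_of_pderiv_eq_zero hch h12 d hd⟩
  have hfa3 : aeval (psiF (k := k)) (a 3) = a 3 := psi_fix fun d hd =>
    ⟨my_support_of_pderiv_eq_zero hch h03 d hd, my_support_of_pderiv_eq_zero hch h13 d hd⟩
  -- apply psi to E2
  have hP2 := congrArg (aeval (psiF (k := k))) hE2
  have t1 : aeval (psiF (k := k)) (a 0 * (2 * X 0 * X 1)) = 0 := by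
    rw [map_mul, map_mul, hX1, mul_zero, mul_zero]
  have t2 : aeval (psiF (k := k)) (a 1 * X 0 ^ 2) = 0 := by
    rw [map_mul, map_pow, hX0, zero_pow two_ne_zero, mul_zero]
  have t3 : aeval (psiF (k := k)) (a 2 * g2) = a 2 * g2 := by rw [map_mul, hfa2, hfix2]
  have t4 : aeval (psiF (k := k)) (a 3 * g3) = a 3 * g3 := by rw [map_mul, hfa3, hfix3]
  simp only [map_add, map_zero] at hP2
  rw [t1, t2, t3, t4] at hP2
  obtain ⟨ha2z, ha3z⟩ := hL m hm (a 2) (a 3) (ha 2) (ha 3) (by linear_combination hP2)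
  -- finish
  rw [ha2z, ha3z, zero_mul, zero_mul, add_zero, add_zero] at hE2
  have hX0ne : (X 0 : MvPolynomial (Fin 4) k) ≠ 0 := X_ne_zero 0
  have hX1ne : (X 1 : MvPolynomial (Fin 4) k) ≠ 0 := X_ne_zero 1
  have ha0z : a 0 = 0 := by
    have h : a 0 * (X 0 * X 1) = 0 := by linear_combination hE2 - X 0 * hE1
    rcases mul_eq_zero.mp h with h | h
    · exact h
    · exact absurd h (mul_ne_zero hX0ne hX1ne)
  have ha1z : a 1 = 0 := by
    rw [ha0z, zero_mul, zero_add] at hE1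
    exact (mul_eq_zero.mp hE1).resolve_right hX0ne
  funext i
  fin_cases i <;> simpa
end

section
/- Consider f = x_0x_1^{k+2} + x_2^{k+3} + x_2^{k+2}x_3 and g = x_2x_3(x_2^{k+1} − x_1^{k+1}) in Q[x_0,x_1,x_2,x_3] for k ≥ 0. Then (f, g) is a regular sequence; equivalently, f and g have no common irreducible factor (both being nonzero and the variety V(f,g) having codimension 2). -/
open MvPolynomial

/-- `f = x₀x₁^{k+2} + x₂^{k+3} + x₂^{k+2}x₃` and
`g = x₂x₃(x₂^{k+1} − x₁^{k+1})` form a regular sequence in `ℚ[x₀,…,x₃]`: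
they have no common (irreducible) factor of positive degree. -/
theorem stmt_15 (K : ℕ) :
    IsRelPrime
      (X 0 * X 1 ^ (K + 2) + X 2 ^ (K + 3) + X 2 ^ (K + 2) * X 3 :
        MvPolynomial (Fin 4) ℚ)
      (X 2 * X 3 * (X 2 ^ (K + 1) - X 1 ^ (K + 1))) := by
  classical
  set f : MvPolynomial (Fin 4) ℚ :=
    X 0 * X 1 ^ (K + 2) + X 2 ^ (K + 3) + X 2 ^ (K + 2) * X 3 with hfdef
  set g : MvPolynomial (Fin 4) ℚ :=
    X 2 * X 3 * (X 2 ^ (K + 1) - X 1 ^ (K + 1)) with hgdef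
  have hf0 : f ≠ 0 := by
    intro h
    have := congrArg (aeval (fun _ : Fin 4 => (1 : ℚ))) h
    simp [hfdef] at this
    norm_num at this
  rw [UniqueFactorizationMonoid.isRelPrime_iff_no_prime_factors hf0]
  intro d hdf hdg hd
  set e := MvPolynomial.finSuccEquiv ℚ 3 with he
  have eX0 : e (X 0) = Polynomial.X := finSuccEquiv_X_zero
  have eX1 : e (X 1) = Polynomial.C (X 0) := by
    rw [show (1 : Fin 4) = Fin.succ 0 from rfl, he, finSuccEquiv_X_succ]
  have eX2 : e (X 2) = Polynomial.C (X 1) := by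
    rw [show (2 : Fin 4) = Fin.succ 1 from rfl, he, finSuccEquiv_X_succ]
  have eX3 : e (X 3) = Polynomial.C (X 2) := by
    rw [show (3 : Fin 4) = Fin.succ 2 from rfl, he, finSuccEquiv_X_succ]
  set g' : MvPolynomial (Fin 3) ℚ := X 1 * X 2 * (X 1 ^ (K + 1) - X 0 ^ (K + 1)) with hg'
  have ef : e f = Polynomial.C (X 0 ^ (K + 2)) * Polynomial.X
        + Polynomial.C (X 1 ^ (K + 3) + X 1 ^ (K + 2) * X 2) := by
    simp only [hfdef, map_add, map_mul, map_pow, eX0, eX1, eX2, eX3]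
    ring
  have eg : e g = Polynomial.C g' := by
    simp only [hgdef, hg', map_add, map_mul, map_pow, map_sub, eX0, eX1, eX2, eX3]
  -- evaluation killing X 0
  set φ : MvPolynomial (Fin 3) ℚ →ₐ[ℚ] ℚ :=
    aeval (fun i : Fin 3 => if i = 0 then (0 : ℚ) else 1) with hφ
  have hg'0 : g' ≠ 0 := by
    intro h
    have := congrArg φ h
    simp [hg', hφ] at this
  -- e d divides the constant polynomial C g', so it is a constant
  have hedg : e d ∣ Polynomial.C g' := eg ▸ map_dvd e hdg
  have hdeg : (e d).natDegree = 0 := by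
    have := Polynomial.natDegree_le_of_dvd hedg (by simpa using hg'0)
    simpa using this
  set c : MvPolynomial (Fin 3) ℚ := (e d).coeff 0 with hc
  have hedc : e d = Polynomial.C c := Polynomial.eq_C_of_natDegree_eq_zero hdeg
  -- c is not a unit
  have hcnu : ¬ IsUnit c := by
    intro h
    apply hd.not_unit
    have : IsUnit (e d) := by rw [hedc]; exact h.map Polynomial.C
    have := this.map e.symm
    simpa using this
  -- c divides g'
  have hcg' : c ∣ g' := by
    have := (Polynomial.C_dvd_iff_dvd_coeff c (Polynomial.C g')).mp (hedc ▸ hedg) 0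
    simpa using this
  -- c divides X 0 ^ (K + 2) (coefficient 1 of e f)
  have hcx : c ∣ X 0 ^ (K + 2) := by
    have hdvd : e d ∣ e f := map_dvd e hdf
    have := (Polynomial.C_dvd_iff_dvd_coeff c (e f)).mp (hedc ▸ hdvd) 1
    rw [ef] at this
    have hcoeff : (Polynomial.C (X 0 ^ (K + 2) : MvPolynomial (Fin 3) ℚ) * Polynomial.X
        + Polynomial.C (X 1 ^ (K + 3) + X 1 ^ (K + 2) * X 2)).coeff 1
        = X 0 ^ (K + 2) := by
      rw [Polynomial.coeff_add, Polynomial.coeff_C_mul, Polynomial.coeff_X_one,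
        Polynomial.coeff_C]
      simp
    rwa [hcoeff] at this
  -- X 0 is prime
  have hX0 : Prime (X 0 : MvPolynomial (Fin 3) ℚ) := by
    rw [← MulEquiv.prime_iff (MvPolynomial.finSuccEquiv ℚ 2).toMulEquiv]
    simpa [finSuccEquiv_X_zero] using
      (Polynomial.prime_X (R := MvPolynomial (Fin 2) ℚ))
  -- conclude
  have hnd : ∀ j : Fin 3, j ≠ 0 → ¬ ((X 0 : MvPolynomial (Fin 3) ℚ) ∣ X j) := by
    intro j hj h
    have := map_dvd φ h
    simp [hφ, hj, zero_dvd_iff] at this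
  obtain ⟨i, hi, hassoc⟩ := (dvd_prime_pow hX0 _).mp hcx
  rcases Nat.eq_zero_or_pos i with rfl | hipos
  · exact hcnu (associated_one_iff_isUnit.mp (by simpa using hassoc))
  have hX0c : (X 0 : MvPolynomial (Fin 3) ℚ) ∣ c :=
    dvd_trans (dvd_pow_self _ hipos.ne') hassoc.symm.dvd
  have hX0g' : (X 0 : MvPolynomial (Fin 3) ℚ) ∣ g' := hX0c.trans hcg'
  rw [hg'] at hX0g'
  rcases hX0.dvd_mul.mp hX0g' with h | h
  · rcases hX0.dvd_mul.mp h with h | h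
    · exact hnd 1 (by decide) h
    · exact hnd 2 (by decide) h
  · have : (X 0 : MvPolynomial (Fin 3) ℚ) ∣ X 1 ^ (K + 1) := by
      have := dvd_add h (dvd_pow_self (X 0 : MvPolynomial (Fin 3) ℚ) (Nat.succ_ne_zero K))
      simpa using this
    exact hnd 1 (by decide) (hX0.dvd_of_dvd_pow this)
end
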